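/- arXiv:0806.4540 — 6 statements merged into one kernel-verified Lean document; each statement's English description precedes it below -/
import Mathlib

section
/- Let Γ be an infinite group that is not presentable by a product. Then every finite index subgroup of Γ has finite centre. Equivalently (contrapositive): if some finite index subgroup of an infinite group Γ has infinite centre, then Γ is presentable by a product. -/
/-- A group `G` is *presentable by a product* if there are groups `A`, `B` and a
homomorphism `φ : A × B →* G` whose image has finite index in `G` and such that
the images `φ(A × {1})` and `φ({1} × B)` are both infinite. -/
def PresentableByProduct (G : Type*) [Group G] : Prop :=
  ∃ (A B : Type) (_ : Group A) (_ : Group B) (φ : A × B →* G),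
    φ.range.index ≠ 0 ∧
    (Set.range fun a : A => φ (a, 1)).Infinite ∧
    (Set.range fun b : B => φ (1, b)).Infinite

/-- Let Γ be an infinite group that is not presentable by a product.
Then every finite index subgroup of Γ has finite centre. -/
theorem center_finite_of_not_presentable {G : Type} [Group G] [Infinite G]
    (h : ¬ PresentableByProduct G)
    (H : Subgroup G) (hH : H.index ≠ 0) :
    Finite (Subgroup.center H) := by
  by_contra hfin
  rw [not_finite_iff_infinite] at hfin
  apply h
  -- H is infinite
  have hHinf : Infinite H := by
    by_contra hf
    rw [not_infinite_iff_finite] at hf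
    have h1 : Nat.card H ≠ 0 := Nat.card_ne_zero.2 ⟨One.instNonempty, hf⟩
    have h2 : Nat.card G = 0 := Nat.card_eq_zero_of_infinite
    have := H.index_mul_card
    rw [h2] at this
    exact (Nat.mul_ne_zero hH h1) this
  -- the homomorphism
  refine ⟨Subgroup.center H, H, inferInstance, inferInstance,
    { toFun := fun p => (p.1.1 : G) * (p.2 : G)
      map_one' := by simp
      map_mul' := ?_ }, ?_, ?_, ?_⟩
  · rintro ⟨a, b⟩ ⟨c, d⟩
    have hc : (c.1 : H) * b = b * c.1 := (Subgroup.mem_center_iff.1 c.2 b).symm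
    have hc' : (c.1 : G) * (b : G) = (b : G) * (c.1 : G) := by
      exact_mod_cast congrArg (Subtype.val) hc
    simp only [Prod.fst_mul, Prod.snd_mul, Subgroup.coe_mul]
    rw [mul_assoc, ← mul_assoc (c.1 : G), hc', mul_assoc, mul_assoc]
  · -- range has finite index: contains H
    intro h0
    apply hH
    refine Nat.eq_zero_of_zero_dvd ?_
    rw [← h0]
    apply Subgroup.index_dvd_of_le
    intro x hx
    exact ⟨(1, ⟨x, hx⟩), by simp⟩
  · -- image of center infinite
    apply Set.infinite_range_of_injective
    intro a b hab
    simp only [MonoidHom.coe_mk, OneHom.coe_mk, Subgroup.coe_one, mul_one] at hab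
    exact Subtype.ext (Subtype.ext hab)
  · apply Set.infinite_range_of_injective
    intro a b hab
    simp only [MonoidHom.coe_mk, OneHom.coe_mk, Subgroup.coe_one, OneMemClass.coe_one, one_mul] at hab
    exact Subtype.ext hab
end

section
/- Let Γ be an infinite group such that every finite index subgroup of Γ has trivial centre. Then Γ is presentable by a product if and only if Γ has a finite index subgroup that is isomorphic to a direct product of two infinite groups. -/
/-- Let Γ be an infinite group such that every finite index subgroup
of Γ has trivial centre. Then Γ is presentable by a product if and only if Γ has
a finite index subgroup that is isomorphic to a direct product of two infinite
groups. -/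
theorem presentable_iff_virtual_product_of_trivial_centers {G : Type} [Group G]
    [Infinite G]
    (hc : ∀ H : Subgroup G, H.index ≠ 0 → Subgroup.center H = ⊥) :
    PresentableByProduct G ↔
      ∃ (H : Subgroup G) (A B : Type) (_ : Group A) (_ : Group B),
        H.index ≠ 0 ∧ Infinite A ∧ Infinite B ∧ Nonempty (H ≃* A × B) := by
  constructor
  · rintro ⟨A, B, _, _, φ, hind, hA, hB⟩
    set H := φ.range with hH
    set C := (φ.comp (MonoidHom.inl A B)).range with hC
    set D := (φ.comp (MonoidHom.inr A B)).range with hD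
    have comm0 : ∀ (a : A) (b : B), Commute (φ (a, 1)) (φ (1, b)) := by
      intro a b
      unfold Commute SemiconjBy
      rw [← map_mul, ← map_mul]
      congr 1
      simp [Prod.mul_def]
    have comm : ∀ (c : C) (d : D), Commute (C.subtype c) (D.subtype d) := by
      rintro ⟨_, a, rfl⟩ ⟨_, b, rfl⟩
      exact comm0 a b
    have hCH : C ≤ H := by rintro x ⟨a, rfl⟩; exact ⟨(a, 1), rfl⟩
    have hDH : D ≤ H := by rintro x ⟨b, rfl⟩; exact ⟨(1, b), rfl⟩
    have key : ∀ x : G, x ∈ C → x ∈ D → x = 1 := by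
      intro x hxC hxD
      have hxH : x ∈ H := hCH hxC
      have hz : (⟨x, hxH⟩ : H) ∈ Subgroup.center H := by
        rw [Subgroup.mem_center_iff]
        rintro ⟨y, ⟨a, b⟩, rfl⟩
        ext
        show φ (a, b) * x = x * φ (a, b)
        have hy : φ (a, b) = φ (a, 1) * φ (1, b) := by
          rw [← map_mul]; congr 1; simp [Prod.mul_def]
        have h1 : Commute (φ (a, 1)) x := comm ⟨φ (a, 1), a, rfl⟩ ⟨x, hxD⟩
        have h2 : Commute x (φ (1, b)) := comm ⟨x, hxC⟩ ⟨φ (1, b), b, rfl⟩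
        calc φ (a, b) * x = φ (a, 1) * (φ (1, b) * x) := by rw [hy, mul_assoc]
          _ = φ (a, 1) * (x * φ (1, b)) := by rw [h2.eq]
          _ = (φ (a, 1) * x) * φ (1, b) := by rw [mul_assoc]
          _ = x * (φ (a, 1) * φ (1, b)) := by rw [h1.eq, mul_assoc]
          _ = x * φ (a, b) := by rw [← hy]
      rw [hc H hind, Subgroup.mem_bot] at hz
      exact congrArg Subtype.val hz
    let μ : C × D →* G := (C.subtype).noncommCoprod D.subtype comm
    have hμ : ∀ p : C × D, μ p = (p.1 : G) * (p.2 : G) := fun p => rfl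
    have hinj : Function.Injective μ := by
      rw [injective_iff_map_eq_one]
      rintro ⟨c, d⟩ h
      rw [hμ] at h
      have hc1 : (c : G) = 1 := by
        apply key _ c.2
        have : (c : G) = (d : G)⁻¹ := by
          rw [eq_inv_iff_mul_eq_one]; exact h
        rw [this]; exact D.inv_mem d.2
      have hd1 : (d : G) = 1 := by
        rw [hc1, one_mul] at h; exact h
      ext <;> simp [hc1, hd1]
    have hrange : μ.range = H := by
      apply le_antisymm
      · rintro _ ⟨⟨c, d⟩, rfl⟩
        rw [hμ]
        exact H.mul_mem (hCH c.2) (hDH d.2)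
      · rintro _ ⟨⟨a, b⟩, rfl⟩
        refine ⟨(⟨φ (a, 1), a, rfl⟩, ⟨φ (1, b), b, rfl⟩), ?_⟩
        rw [hμ]
        show φ (a, 1) * φ (1, b) = _
        rw [← map_mul]; congr 1; simp [Prod.mul_def]
    have infC : Infinite C := by
      rw [Set.infinite_coe_iff.symm] at hA
      exact hA
    have infD : Infinite D := by
      rw [Set.infinite_coe_iff.symm] at hB
      exact hB
    exact ⟨H, C, D, inferInstance, inferInstance, hind, infC, infD,
      ⟨((MonoidHom.ofInjective hinj).trans (MulEquiv.subgroupCongr hrange)).symm⟩⟩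
  · rintro ⟨H, A, B, _, _, hind, hA, hB, ⟨e⟩⟩
    refine ⟨A, B, inferInstance, inferInstance, H.subtype.comp e.symm.toMonoidHom, ?_, ?_, ?_⟩
    · have : (H.subtype.comp e.symm.toMonoidHom).range = H := by
        rw [MonoidHom.range_comp]
        have : e.symm.toMonoidHom.range = ⊤ :=
          MonoidHom.range_eq_top_of_surjective _ e.symm.surjective
        rw [this, ← MonoidHom.range_eq_map, Subgroup.range_subtype]
      rw [this]; exact hind
    · apply Set.infinite_range_of_injective
      intro a1 a2 h
      have := e.symm.injective (H.subtype_injective h)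
      exact ((Prod.mk.injEq _ _ _ _).mp this).1
    · apply Set.infinite_range_of_injective
      intro b1 b2 h
      have := e.symm.injective (H.subtype_injective h)
      exact ((Prod.mk.injEq _ _ _ _).mp this).2
end

section
/- Let Γ be an infinite group and let Γ' be a subgroup of finite index in Γ (so Γ' is also infinite). Then Γ' is presentable by a product if and only if Γ is presentable by a product. -/
/-- A finite-index subgroup of an infinite group is infinite (as a set). -/
lemma aux_infinite_of_index_ne_zero {G : Type*} [Group G] [Infinite G]
    (S : Subgroup G) (h : S.index ≠ 0) : (S : Set G).Infinite := by
  by_contra hf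
  rw [Set.not_infinite] at hf
  haveI : Finite S := hf.to_subtype
  have h1 : Nat.card S ≠ 0 := Nat.card_ne_zero.mpr ⟨One.instNonempty, ‹_›⟩
  exact mul_ne_zero h1 h (S.card_mul_index.trans Nat.card_eq_zero_of_infinite)

/-- If `f : A →* G'` has infinite range and `S` has finite index in `A`, then
the image of `S` under `f` is infinite. -/
lemma aux_image_infinite {A G' : Type*} [Group A] [Group G'] (f : A →* G')
    (S : Subgroup A) (hS : S.index ≠ 0) (h : (Set.range f).Infinite) :
    (f '' (S : Set A)).Infinite := by
  haveI : Infinite f.range := by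
    rw [Set.infinite_coe_iff.symm] at h
    exact h
  have hT : (S.map f.rangeRestrict).index ≠ 0 := fun h0 =>
    hS (Nat.eq_zero_of_zero_dvd (h0 ▸ S.index_map_dvd f.rangeRestrict_surjective))
  have hinf : ((S.map f.rangeRestrict : Subgroup f.range) : Set f.range).Infinite :=
    aux_infinite_of_index_ne_zero _ hT
  have himg : Subtype.val '' ((S.map f.rangeRestrict : Subgroup f.range) : Set f.range)
      = f '' (S : Set A) := by
    ext x
    constructor
    · rintro ⟨⟨y, hy⟩, hmem, rfl⟩
      rcases hmem with ⟨a, ha, hfa⟩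
      exact ⟨a, ha, congrArg Subtype.val hfa⟩
    · rintro ⟨a, ha, rfl⟩
      exact ⟨f.rangeRestrict a, ⟨a, ha, rfl⟩, rfl⟩
  rw [← himg]
  exact Set.Infinite.image (Subtype.val_injective.injOn) hinf

/-- Let Γ be an infinite group and let Γ' be a subgroup of finite
index in Γ (so Γ' is also infinite). Then Γ' is presentable by a product if and
only if Γ is presentable by a product. -/
theorem presentable_iff_finite_index_subgroup_presentable {G : Type} [Group G]
    [Infinite G] (H : Subgroup G) (hH : H.index ≠ 0) :
    PresentableByProduct H ↔ PresentableByProduct G := by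
  constructor
  · rintro ⟨A, B, _, _, φ, h1, h2, h3⟩
    refine ⟨A, B, ‹_›, ‹_›, H.subtype.comp φ, ?_, ?_, ?_⟩
    · have hr : (H.subtype.comp φ).range = φ.range.map H.subtype :=
        MonoidHom.range_comp _ _
      rw [hr, Subgroup.index_map, H.ker_subtype, sup_bot_eq, H.range_subtype]
      exact mul_ne_zero h1 hH
    · have : (Set.range fun a : A => (H.subtype.comp φ) (a, 1))
          = Subtype.val '' (Set.range fun a : A => φ (a, 1)) := by
        rw [← Set.range_comp]; rfl
      rw [this]
      exact Set.Infinite.image (Subtype.val_injective.injOn) h2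
    · have : (Set.range fun b : B => (H.subtype.comp φ) (1, b))
          = Subtype.val '' (Set.range fun b : B => φ (1, b)) := by
        rw [← Set.range_comp]; rfl
      rw [this]
      exact Set.Infinite.image (Subtype.val_injective.injOn) h3
  · rintro ⟨A, B, _, _, ψ, h1, h2, h3⟩
    set f₁ : A →* G := ψ.comp (MonoidHom.inl A B) with hf₁
    set f₂ : B →* G := ψ.comp (MonoidHom.inr A B) with hf₂
    set A₁ : Subgroup A := H.comap f₁ with hA₁
    set B₁ : Subgroup B := H.comap f₂ with hB₁
    have hA₁i : A₁.index ≠ 0 := by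
      rw [hA₁, Subgroup.index_comap]
      intro h0
      exact hH (Subgroup.index_eq_zero_of_relIndex_eq_zero h0)
    have hB₁i : B₁.index ≠ 0 := by
      rw [hB₁, Subgroup.index_comap]
      intro h0
      exact hH (Subgroup.index_eq_zero_of_relIndex_eq_zero h0)
    -- the homomorphism A₁ × B₁ →* H
    have hmem : ∀ (a : A₁) (b : B₁), ψ ((a : A), (b : B)) ∈ H := by
      intro a b
      have : ((a : A), (b : B)) = ((a : A), 1) * (1, (b : B)) := by
        simp [Prod.ext_iff]
      rw [this, map_mul]
      exact H.mul_mem a.2 b.2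
    refine ⟨A₁, B₁, inferInstance, inferInstance,
      { toFun := fun p => ⟨ψ ((p.1 : A), (p.2 : B)), hmem p.1 p.2⟩
        map_one' := by ext; simp; exact ψ.map_one
        map_mul' := by
          rintro ⟨a, b⟩ ⟨a', b'⟩
          ext
          simp [← map_mul] }, ?_, ?_, ?_⟩
    · set φ : A₁ × B₁ →* H :=
        { toFun := fun p => ⟨ψ ((p.1 : A), (p.2 : B)), hmem p.1 p.2⟩
          map_one' := by ext; simp; exact ψ.map_one
          map_mul' := by
            rintro ⟨a, b⟩ ⟨a', b'⟩
            ext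
            simp [← map_mul] } with hφ
      -- K := image of A₁ × B₁ in G
      set K : Subgroup G := (A₁.prod B₁).map ψ with hK
      have hKle : K ≤ H := by
        rintro x ⟨⟨a, b⟩, ⟨ha, hb⟩, rfl⟩
        exact hmem ⟨a, ha⟩ ⟨b, hb⟩
      have hprodidx : (A₁.prod B₁).index ≠ 0 := by
        rw [Subgroup.index_prod]
        exact mul_ne_zero hA₁i hB₁i
      have hKidx : K.index ≠ 0 := by
        rw [hK, Subgroup.index_map]
        exact mul_ne_zero
          (fun h0 => hprodidx (Nat.eq_zero_of_zero_dvd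
            (h0 ▸ Subgroup.index_dvd_of_le le_sup_left))) h1
      have hrel : K.relIndex H ≠ 0 := by
        intro h0
        have := Subgroup.relIndex_mul_index hKle
        rw [h0, zero_mul] at this
        exact hKidx this.symm
      have hle : K.subgroupOf H ≤ φ.range := by
        rintro ⟨x, hx⟩ hmem'
        have : x ∈ K := hmem'
        rcases this with ⟨⟨a, b⟩, ⟨ha, hb⟩, rfl⟩
        exact ⟨(⟨a, ha⟩, ⟨b, hb⟩), rfl⟩
      have : φ.range.index ∣ (K.subgroupOf H).index := Subgroup.index_dvd_of_le hle
      intro h0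
      rw [h0] at this
      exact hrel (Nat.eq_zero_of_zero_dvd this)
    · have key : (f₁ '' (A₁ : Set A)).Infinite := by
        apply aux_image_infinite f₁ A₁ hA₁i
        have : Set.range f₁ = Set.range fun a : A => ψ (a, 1) := rfl
        rw [this]; exact h2
      have himg : Subtype.val '' (Set.range fun a : A₁ =>
          (⟨ψ ((a : A), 1), hmem a 1⟩ : H)) = f₁ '' (A₁ : Set A) := by
        ext x
        constructor
        · rintro ⟨y, ⟨a, rfl⟩, rfl⟩
          exact ⟨(a : A), a.2, rfl⟩
        · rintro ⟨a, ha, rfl⟩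
          exact ⟨⟨f₁ a, ha⟩, ⟨⟨a, ha⟩, rfl⟩, rfl⟩
      have := key
      rw [← himg] at this
      exact Set.Infinite.of_image _ this
    · have key : (f₂ '' (B₁ : Set B)).Infinite := by
        apply aux_image_infinite f₂ B₁ hB₁i
        have : Set.range f₂ = Set.range fun b : B => ψ (1, b) := rfl
        rw [this]; exact h3
      have himg : Subtype.val '' (Set.range fun b : B₁ =>
          (⟨ψ (1, (b : B)), hmem 1 b⟩ : H)) = f₂ '' (B₁ : Set B) := by
        ext x
        constructor
        · rintro ⟨y, ⟨b, rfl⟩, rfl⟩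
          exact ⟨(b : B), b.2, rfl⟩
        · rintro ⟨b, hb, rfl⟩
          exact ⟨⟨f₂ b, hb⟩, ⟨⟨b, hb⟩, rfl⟩, rfl⟩
      have := key
      rw [← himg] at this
      exact Set.Infinite.of_image _ this
end

section
/- Let Γ be a group that is not virtually cyclic, that contains an element of infinite order, and in which the centraliser of every element of infinite order is virtually cyclic. Then the centre of Γ is finite. -/
/-- A group is *virtually cyclic* if it contains a cyclic subgroup of finite index. -/
def VirtuallyCyclic (G : Type*) [Group G] : Prop :=
  ∃ C : Subgroup G, IsCyclic C ∧ C.index ≠ 0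

lemma VirtuallyCyclic.of_mulEquiv {G H : Type*} [Group G] [Group H] (e : G ≃* H)
    (h : VirtuallyCyclic G) : VirtuallyCyclic H := by
  obtain ⟨C, hC, hi⟩ := h
  haveI := hC
  refine ⟨C.map (e : G →* H), ?_, ?_⟩
  · exact isCyclic_of_surjective (C.equivMapOfInjective (e : G →* H) e.injective).toMonoidHom
      (C.equivMapOfInjective (e : G →* H) e.injective).surjective
  · rw [Subgroup.map_equiv_eq_comap_symm, Subgroup.index_comap_of_surjective _ e.symm.surjective]
    exact hi

lemma isCyclic_subgroupOf {G : Type*} [Group G] {C : Subgroup G} (Z : Subgroup G)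
    [IsCyclic C] : IsCyclic (C.subgroupOf Z) := by
  haveI : IsCyclic ((C.subgroupOf Z).map Z.subtype) := by
    rw [Subgroup.subgroupOf_map_subtype]
    exact Subgroup.isCyclic_of_le inf_le_left
  let e := Subgroup.equivMapOfInjective (C.subgroupOf Z) Z.subtype Z.subtype_injective
  exact isCyclic_of_surjective e.symm.toMonoidHom e.symm.surjective

lemma exists_not_isOfFinOrder_of_virtuallyCyclic {G : Type*} [Group G] [Infinite G]
    (h : VirtuallyCyclic G) : ∃ g : G, ¬ IsOfFinOrder g := by
  obtain ⟨C, hC, hi⟩ := h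
  haveI := hC
  haveI : Infinite C := by
    by_contra hCfin
    rw [not_infinite_iff_finite] at hCfin
    have h1 : Nat.card C * C.index = Nat.card G := Subgroup.card_mul_index C
    have h2 : Nat.card G ≠ 0 := by
      rw [← h1]; exact Nat.mul_ne_zero Nat.card_pos.ne' hi
    exact h2 Nat.card_eq_zero_of_infinite
  obtain ⟨g, hg⟩ := IsCyclic.exists_generator (α := C)
  refine ⟨(g : G), fun hfin => ?_⟩
  have hfin' : IsOfFinOrder g := Submonoid.isOfFinOrder_coe.mp hfin
  have : (Subgroup.zpowers g : Set C).Finite := hfin'.finite_zpowers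
  have huniv : (Subgroup.zpowers g : Set C) = Set.univ := by
    ext x; simpa using hg x
  rw [huniv] at this
  exact Set.infinite_univ this

/-- Let Γ be a group that is not virtually cyclic, that contains an
element of infinite order, and in which the centraliser of every element of
infinite order is virtually cyclic. Then the centre of Γ is finite. -/
theorem center_finite_of_virtually_cyclic_centralizers {G : Type*} [Group G]
    (hnvc : ¬ VirtuallyCyclic G)
    (hex : ∃ g : G, ¬ IsOfFinOrder g)
    (hcen : ∀ g : G, ¬ IsOfFinOrder g → VirtuallyCyclic (Subgroup.centralizer {g})) :
    Finite (Subgroup.center G) := by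
  obtain ⟨g, hg⟩ := hex
  by_contra hfin
  rw [not_finite_iff_infinite] at hfin
  obtain ⟨C, hC, hCi⟩ := hcen g hg
  haveI := hC
  haveI : C.FiniteIndex := ⟨hCi⟩
  have hZle : Subgroup.center G ≤ Subgroup.centralizer ({g} : Set G) :=
    Subgroup.center_le_centralizer _
  set Z := (Subgroup.center G).subgroupOf (Subgroup.centralizer ({g} : Set G)) with hZdef
  haveI : Infinite Z :=
    (Subgroup.subgroupOfEquivOfLe hZle).toEquiv.infinite_iff.mpr hfin
  have hvcZ : VirtuallyCyclic Z := by
    refine ⟨C.subgroupOf Z, isCyclic_subgroupOf Z, ?_⟩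
    exact Subgroup.FiniteIndex.index_ne_zero (H := C.subgroupOf Z)
  obtain ⟨z, hz⟩ := exists_not_isOfFinOrder_of_virtuallyCyclic hvcZ
  have hz1 : ¬ IsOfFinOrder ((z : Subgroup.centralizer ({g} : Set G)) : G) := by
    intro h
    exact hz (Submonoid.isOfFinOrder_coe.mp (Submonoid.isOfFinOrder_coe.mp h))
  have hzc : ((z : Subgroup.centralizer ({g} : Set G)) : G) ∈ Subgroup.center G := z.2
  have htop : Subgroup.centralizer ({((z : Subgroup.centralizer ({g} : Set G)) : G)} : Set G) = ⊤ := by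
    rw [eq_top_iff]
    intro x _
    refine Subgroup.mem_centralizer_iff.2 fun h hh => ?_
    rw [Set.mem_singleton_iff] at hh
    subst hh
    exact (Subgroup.mem_center_iff.1 hzc x).symm
  have hvcT : VirtuallyCyclic (⊤ : Subgroup G) := htop ▸ hcen _ hz1
  exact hnvc (hvcT.of_mulEquiv Subgroup.topEquiv)
end

section
/- Let Γ be a group that is not virtually cyclic, that contains an element of infinite order, and in which the centraliser of every element of infinite order is virtually cyclic. Then Γ is not presentable by a product. -/
/-- Lift a virtually cyclic subgroup to a cyclic subgroup of the ambient group of finite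
relative index. -/
private lemma vc_lift {G : Type} [Group G] {D : Subgroup G}
    (h : VirtuallyCyclic ↥D) :
    ∃ Z : Subgroup G, Z ≤ D ∧ IsCyclic ↥Z ∧ Z.relIndex D ≠ 0 := by
  obtain ⟨C, hC, hidx⟩ := h
  refine ⟨C.map D.subtype, Subgroup.map_subtype_le C, ?_, ?_⟩
  · have e := C.equivMapOfInjective D.subtype D.subtype_injective
    exact isCyclic_of_surjective e.toMonoidHom e.surjective
  · rwa [Subgroup.relIndex, Subgroup.subgroupOf,
      Subgroup.comap_map_eq_self_of_injective D.subtype_injective]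

private lemma exists_infinite_order_mem {G : Type} [Group G] {Z : Subgroup G}
    (hc : IsCyclic ↥Z) (hi : Infinite ↥Z) :
    ∃ z ∈ Z, ¬ IsOfFinOrder z := by
  obtain ⟨ζ, hζ⟩ := hc.exists_generator
  refine ⟨ζ, ζ.2, fun hfo => ?_⟩
  have hfo' : IsOfFinOrder ζ := by
    rw [isOfFinOrder_iff_pow_eq_one] at hfo ⊢
    obtain ⟨n, hn, h1⟩ := hfo
    exact ⟨n, hn, by apply Subtype.ext; simpa using h1⟩
  have hfin : Finite ↥Z :=
    Set.finite_univ_iff.mp (hfo'.finite_zpowers.subset fun x _ => hζ x)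
  exact @not_finite ↥Z hi hfin

private lemma infinite_of_relindex_ne_zero {G : Type} [Group G] {H K : Subgroup G}
    (hle : H ≤ K) (hidx : H.relIndex K ≠ 0) (hK : Infinite ↥K) : Infinite ↥H := by
  have h1 : (H.subgroupOf K).index * Nat.card ↥(H.subgroupOf K) = Nat.card ↥K :=
    Subgroup.index_mul_card _
  have h2 : Nat.card ↥K = 0 := Nat.card_eq_zero.mpr (Or.inr hK)
  have h3 : Nat.card ↥(H.subgroupOf K) = 0 := by
    rcases Nat.mul_eq_zero.mp (h1.trans h2) with h | h
    · exact absurd h hidx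
    · exact h
  have h4 : Infinite ↥(H.subgroupOf K) := by
    rcases Nat.card_eq_zero.mp h3 with h | h
    · exact absurd h (not_isEmpty_of_nonempty _)
    · exact h
  exact Infinite.of_injective _ (Subgroup.subgroupOfEquivOfLe hle).injective

/-- Covering a finite-index subgroup by finitely many cosets. -/
private lemma relindex_ne_zero_of_cover {G : Type} [Group G] {H K R S T : Subgroup G}
    (hTR : T ≤ R) (hHT : H ≤ T) (hKR : K ≤ R) (hSK : S ≤ K) (hST : S ≤ T)
    (hSrel : S.relIndex K ≠ 0)
    (hfact : ∀ x ∈ R, ∃ h ∈ H, ∃ k ∈ K, h * k = k * h ∧ x = h * k) :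
    T.relIndex R ≠ 0 := by
  have hfin : Finite (↥K ⧸ S.subgroupOf K) := by
    rw [Subgroup.relIndex, Subgroup.index] at hSrel
    exact (Nat.card_ne_zero.mp hSrel).2
  let f : (↥K ⧸ S.subgroupOf K) → (↥R ⧸ T.subgroupOf R) :=
    Quotient.map' (fun k => Subgroup.inclusion hKR k)
      (by
        intro a b hab
        rw [QuotientGroup.leftRel_apply] at hab ⊢
        have h1 : ((a : G))⁻¹ * (b : G) ∈ S := hab
        exact Subgroup.mem_subgroupOf.mpr (hST h1))
  have hsurj : Function.Surjective f := by
    intro q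
    induction q using Quotient.inductionOn' with
    | h x =>
      obtain ⟨h, hh, k, hk, hcomm, hx⟩ := hfact x x.2
      refine ⟨Quotient.mk'' ⟨k, hk⟩, ?_⟩
      apply Quotient.sound'
      rw [QuotientGroup.leftRel_apply]
      apply Subgroup.mem_subgroupOf.mpr
      simp only [MulMemClass.coe_mul, InvMemClass.coe_inv, Subgroup.coe_inclusion]
      rw [hx, hcomm, inv_mul_cancel_left]
      exact hHT hh
  have hfin2 : Finite (↥R ⧸ T.subgroupOf R) := Finite.of_surjective f hsurj
  rw [Subgroup.relIndex, Subgroup.index]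
  exact Nat.card_ne_zero.mpr ⟨inferInstance, hfin2⟩

private lemma core_lemma {G : Type} [Group G]
    (hnvc : ¬ VirtuallyCyclic G)
    (hcen : ∀ g : G, ¬ IsOfFinOrder g → VirtuallyCyclic (Subgroup.centralizer {g}))
    (H K R : Subgroup G) (hHR : H ≤ R) (hKR : K ≤ R)
    (hcomm : ∀ h ∈ H, ∀ k ∈ K, h * k = k * h)
    (hfact : ∀ x ∈ R, ∃ h ∈ H, ∃ k ∈ K, x = h * k)
    (hRidx : R.index ≠ 0)
    (hKinf : Infinite ↥K)
    (h : G) (hh : h ∈ H) (hho : ¬ IsOfFinOrder h) : False := by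
  have hKC : K ≤ Subgroup.centralizer {h} := fun k hk =>
    Subgroup.mem_centralizer_singleton_iff.mpr (hcomm h hh k hk).symm
  obtain ⟨Z, hZC, hZcyc, hZrel⟩ := vc_lift (hcen h hho)
  have hZK : Z.relIndex K ≠ 0 := fun h0 =>
    hZrel (Subgroup.relIndex_eq_zero_of_le_right hKC h0)
  have hSrel : (Z ⊓ K).relIndex K ≠ 0 := by rwa [Subgroup.inf_relIndex_right]
  have hSinf : Infinite ↥(Z ⊓ K) := infinite_of_relindex_ne_zero inf_le_right hSrel hKinf
  haveI : IsCyclic ↥Z := hZcyc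
  have hScyc : IsCyclic ↥(Z ⊓ K) := Subgroup.isCyclic_of_le inf_le_left
  obtain ⟨z, hzS, hzo⟩ := exists_infinite_order_mem hScyc hSinf
  have hzZ : z ∈ Z := hzS.1
  have hzK : z ∈ K := hzS.2
  set D := Subgroup.centralizer {z} with hD
  have hHD : H ≤ D := fun h' hh' =>
    Subgroup.mem_centralizer_singleton_iff.mpr (hcomm h' hh' z hzK)
  have hZD : Z ≤ D := by
    intro w hw
    obtain ⟨ζ, hζ⟩ := (inferInstance : IsCyclic ↥Z).exists_generator
    obtain ⟨m, hm⟩ := hζ ⟨w, hw⟩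
    obtain ⟨n, hn⟩ := hζ ⟨z, hzZ⟩
    apply Subgroup.mem_centralizer_singleton_iff.mpr
    have hcz : (⟨w, hw⟩ : ↥Z) * ⟨z, hzZ⟩ = ⟨z, hzZ⟩ * ⟨w, hw⟩ := by
      rw [← hm, ← hn]
      exact ((Commute.refl ζ).zpow_zpow m n)
    have := congrArg (Subtype.val) hcz
    simpa using this
  set T := H ⊔ (K ⊓ D) with hT
  have hTD : T ≤ D := sup_le hHD inf_le_right
  have hTR : T ≤ R := sup_le hHR (inf_le_left.trans hKR)
  have hSle : Z ⊓ K ≤ K ⊓ D := le_inf inf_le_right (inf_le_left.trans hZD)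
  have hKDrel : (K ⊓ D).relIndex K ≠ 0 := fun h0 =>
    hSrel (eq_zero_of_zero_dvd (h0 ▸ Subgroup.relIndex_dvd_of_le_left K hSle))
  have hTrel : T.relIndex R ≠ 0 := by
    refine relindex_ne_zero_of_cover hTR le_sup_left hKR inf_le_left le_sup_right hKDrel ?_
    intro x hx
    obtain ⟨h', hh', k', hk', hx'⟩ := hfact x hx
    exact ⟨h', hh', k', hk', hcomm h' hh' k' hk', hx'⟩
  have hTidx : T.index ≠ 0 := by
    rw [← Subgroup.relIndex_mul_index hTR]
    exact mul_ne_zero hTrel hRidx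
  have hDidx : D.index ≠ 0 := fun h0 =>
    hTidx (eq_zero_of_zero_dvd (h0 ▸ Subgroup.index_dvd_of_le hTD))
  obtain ⟨Z₂, hZ₂D, hZ₂cyc, hZ₂rel⟩ := vc_lift (hcen z hzo)
  refine hnvc ⟨Z₂, hZ₂cyc, ?_⟩
  rw [← Subgroup.relIndex_mul_index hZ₂D]
  exact mul_ne_zero hZ₂rel hDidx

/-- Let Γ be a group that is not virtually cyclic, that contains an
element of infinite order, and in which the centraliser of every element of
infinite order is virtually cyclic. Then Γ is not presentable by a product. -/
theorem not_presentable_of_virtually_cyclic_centralizers {G : Type} [Group G]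
    (hnvc : ¬ VirtuallyCyclic G)
    (hex : ∃ g : G, ¬ IsOfFinOrder g)
    (hcen : ∀ g : G, ¬ IsOfFinOrder g → VirtuallyCyclic (Subgroup.centralizer {g})) :
    ¬ PresentableByProduct G := by
  rintro ⟨A, B, _, _, φ, hidx, hAinf, hBinf⟩
  obtain ⟨g, hg⟩ := hex
  set H := (φ.comp (MonoidHom.inl A B)).range with hHdef
  set K := (φ.comp (MonoidHom.inr A B)).range with hKdef
  set R := φ.range with hRdef
  have hHR : H ≤ R := by rintro x ⟨a, rfl⟩; exact ⟨(a, 1), rfl⟩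
  have hKR : K ≤ R := by rintro x ⟨b, rfl⟩; exact ⟨(1, b), rfl⟩
  have hcomm : ∀ h ∈ H, ∀ k ∈ K, h * k = k * h := by
    rintro x ⟨a, rfl⟩ y ⟨b, rfl⟩
    have hab : ((a, 1) : A × B) * (1, b) = (1, b) * (a, 1) := by
      simp [Prod.ext_iff]
    simp only [MonoidHom.comp_apply, MonoidHom.inl_apply, MonoidHom.inr_apply]
    rw [← map_mul, ← map_mul, hab]
  have hfact : ∀ x ∈ R, ∃ h ∈ H, ∃ k ∈ K, x = h * k := by
    rintro x ⟨⟨a, b⟩, rfl⟩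
    refine ⟨φ (a, 1), ⟨a, rfl⟩, φ (1, b), ⟨b, rfl⟩, ?_⟩
    rw [← map_mul]
    congr 1
    simp [Prod.ext_iff]
  have hHinf : Infinite ↥H := by
    rw [Set.infinite_coe_iff.symm] at hAinf
    exact Infinite.of_injective (fun x : (Set.range fun a : A => φ (a, 1)) =>
      (⟨x.1, by obtain ⟨a, ha⟩ := x.2; exact ⟨a, ha⟩⟩ : ↥H))
      (fun x y hxy => Subtype.ext (congrArg Subtype.val hxy))
  have hKinf : Infinite ↥K := by
    rw [Set.infinite_coe_iff.symm] at hBinf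
    exact Infinite.of_injective (fun x : (Set.range fun b : B => φ (1, b)) =>
      (⟨x.1, by obtain ⟨b, hb⟩ := x.2; exact ⟨b, hb⟩⟩ : ↥K))
      (fun x y hxy => Subtype.ext (congrArg Subtype.val hxy))
  obtain ⟨n, hn0, -, hmem⟩ := Subgroup.exists_pow_mem_of_index_ne_zero hidx g
  have hgn : ¬ IsOfFinOrder (g ^ n) := fun hfo => hg (hfo.of_pow hn0.ne')
  obtain ⟨h, hh, k, hk, hx⟩ := hfact (g ^ n) hmem
  by_cases hhfo : IsOfFinOrder h
  · have hkfo : ¬ IsOfFinOrder k := by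
      intro hkfo
      exact hgn (hx ▸ (Commute.isOfFinOrder_mul (hcomm h hh k hk) hhfo hkfo))
    refine core_lemma hnvc hcen K H R hKR hHR
      (fun k' hk' h' hh' => (hcomm h' hh' k' hk').symm)
      (fun x hx' => ?_) hidx hHinf k hk hkfo
    obtain ⟨h', hh', k', hk', hxx⟩ := hfact x hx'
    exact ⟨k', hk', h', hh', by rw [hxx, hcomm h' hh' k' hk']⟩
  · exact core_lemma hnvc hcen H K R hHR hKR hcomm hfact hidx hKinf h hh hhfo
end

section
/- Let Γ be a group, K a normal subgroup of Γ with quotient map π : Γ → Γ/K, and set Q = Γ/K. Assume that K and Q are both nontrivial, torsion-free, and not presentable by products. Then Γ is presentable by a product if and only if there exist subgroups H₁ ≤ K and H₂ ≤ Γ such that: H₁ has finite index in K; π restricted to H₂ is injective and π(H₂) has finite index in Q; H₁ and H₂ commute elementwise; and the subgroup of Γ generated by H₁ ∪ H₂ has finite index in Γ. In other words, Γ is presentable by a product if and only if Γ has a finite index subgroup that is a direct product of a finite index subgroup of K and a subgroup mapping isomorphically onto a finite index subgroup of Q. -/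
section Aux

variable {H : Type*} [Group H]

/-- The multiplication homomorphism from the product of two elementwise commuting
subgroups. -/
def commMulHom (C₁ C₂ : Subgroup H) (hcomm : ∀ x ∈ C₁, ∀ y ∈ C₂, x * y = y * x) :
    C₁ × C₂ →* H where
  toFun p := (p.1 : H) * (p.2 : H)
  map_one' := by simp
  map_mul' p q := by
    have h := hcomm (q.1 : H) q.1.2 (p.2 : H) p.2.2
    simp only [Prod.fst_mul, Prod.snd_mul, Subgroup.coe_mul]
    have e : (p.1 : H) * q.1 * ((p.2 : H) * q.2) = p.1 * ((q.1 : H) * p.2) * q.2 := by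
      group
    rw [e, h]
    group

lemma commMulHom_apply (C₁ C₂ : Subgroup H) (hcomm : ∀ x ∈ C₁, ∀ y ∈ C₂, x * y = y * x)
    (p : C₁ × C₂) : commMulHom C₁ C₂ hcomm p = (p.1 : H) * (p.2 : H) := rfl

lemma commMulHom_range (C₁ C₂ : Subgroup H) (hcomm : ∀ x ∈ C₁, ∀ y ∈ C₂, x * y = y * x) :
    (commMulHom C₁ C₂ hcomm).range = C₁ ⊔ C₂ := by
  apply le_antisymm
  · rintro x ⟨p, rfl⟩
    exact mul_mem (Subgroup.mem_sup_left p.1.2) (Subgroup.mem_sup_right p.2.2)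
  · rw [sup_le_iff]
    constructor
    · intro x hx
      exact ⟨(⟨x, hx⟩, 1), by simp [commMulHom_apply]⟩
    · intro x hx
      exact ⟨(1, ⟨x, hx⟩), by simp [commMulHom_apply]⟩

lemma commMulHom_left (C₁ C₂ : Subgroup H) (hcomm : ∀ x ∈ C₁, ∀ y ∈ C₂, x * y = y * x) :
    (Set.range fun a : C₁ => commMulHom C₁ C₂ hcomm (a, 1)) = (C₁ : Set H) := by
  ext x
  simp [commMulHom_apply]

lemma commMulHom_right (C₁ C₂ : Subgroup H) (hcomm : ∀ x ∈ C₁, ∀ y ∈ C₂, x * y = y * x) :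
    (Set.range fun b : C₂ => commMulHom C₁ C₂ hcomm (1, b)) = (C₂ : Set H) := by
  ext x
  simp [commMulHom_apply]

/-- Every element of the join of two elementwise commuting subgroups is a product. -/
lemma mem_sup_of_comm {C₁ C₂ : Subgroup H} (hcomm : ∀ x ∈ C₁, ∀ y ∈ C₂, x * y = y * x)
    {x : H} (hx : x ∈ C₁ ⊔ C₂) : ∃ c₁ ∈ C₁, ∃ c₂ ∈ C₂, x = c₁ * c₂ := by
  have h : C₁ ⊔ C₂ ≤ (commMulHom C₁ C₂ hcomm).range := (commMulHom_range C₁ C₂ hcomm).ge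
  obtain ⟨p, rfl⟩ := h hx
  exact ⟨p.1, p.1.2, p.2, p.2.2, rfl⟩

/-- A finite subgroup of a torsion-free group is trivial. -/
lemma subgroup_eq_bot_of_finite (htf : ∀ g : H, g ≠ 1 → ¬ IsOfFinOrder g) (S : Subgroup H)
    (hS : (S : Set H).Finite) : S = ⊥ := by
  rw [eq_bot_iff]
  intro x hx
  haveI : Finite S := hS.to_subtype
  have h1 : IsOfFinOrder (⟨x, hx⟩ : S) := isOfFinOrder_of_finite _
  have h2 : IsOfFinOrder x := S.subtype.isOfFinOrder h1
  rw [Subgroup.mem_bot]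
  by_contra hx1
  exact htf x hx1 h2

/-- A torsion-free group with a nontrivial element is infinite. -/
lemma infinite_of_torsionfree (htf : ∀ g : H, g ≠ 1 → ¬ IsOfFinOrder g) (g : H)
    (hg : g ≠ 1) : Infinite H :=
  Infinite.of_injective _ (injective_zpow_iff_not_isOfFinOrder.2 (htf g hg))

/-- A finite-index subgroup of an infinite group is infinite. -/
lemma infinite_subgroup_of_index_ne_zero [Infinite H] (S : Subgroup H) (h : S.index ≠ 0) :
    Infinite S := by
  have hc : S.index * Nat.card S = 0 := by
    rw [S.index_mul_card, Nat.card_eq_zero_of_infinite]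
  have h0 : Nat.card S = 0 := by
    rcases Nat.mul_eq_zero.1 hc with h' | h'
    · exact absurd h' h
    · exact h'
  rcases Nat.card_eq_zero.1 h0 with h' | h'
  · exact h'.elim (1 : S)
  · exact h'

/-- In a group not presentable by a product, two elementwise commuting subgroups
generating a finite-index subgroup cannot both be infinite. -/
lemma key {H : Type} [Group H] (hnp : ¬ PresentableByProduct H)
    (C₁ C₂ : Subgroup H) (hcomm : ∀ x ∈ C₁, ∀ y ∈ C₂, x * y = y * x)
    (hidx : (C₁ ⊔ C₂).index ≠ 0) :
    (C₁ : Set H).Finite ∨ (C₂ : Set H).Finite := by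
  by_contra hfin
  push_neg at hfin
  apply hnp
  refine ⟨C₁, C₂, inferInstance, inferInstance, commMulHom C₁ C₂ hcomm, ?_, ?_, ?_⟩
  · rw [commMulHom_range]; exact hidx
  · rw [commMulHom_left]; exact hfin.1
  · rw [commMulHom_right]; exact hfin.2

end Aux

section ForwardAux

/-- The heart of the forward direction: if `C₁ ≤ K` is infinite, commutes with `C₂`,
and `C₁ ⊔ C₂` has finite index, then `(C₁, C₂)` is the desired pair. -/
lemma forward_aux {G : Type} [Group G] (K : Subgroup G) [K.Normal]
    (hKtf : ∀ g ∈ K, g ≠ 1 → ¬ IsOfFinOrder g)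
    (hKnp : ¬ PresentableByProduct K)
    (C₁ C₂ : Subgroup G) (hcomm : ∀ x ∈ C₁, ∀ y ∈ C₂, x * y = y * x)
    (hidx : (C₁ ⊔ C₂).index ≠ 0)
    (hC₁inf : (C₁ : Set G).Infinite)
    (hC₁K : C₁ ≤ K) :
    ∃ H₁ H₂ : Subgroup G,
      H₁ ≤ K ∧
      H₁.relIndex K ≠ 0 ∧
      (∀ x ∈ H₂, ∀ y ∈ H₂,
        QuotientGroup.mk' K x = QuotientGroup.mk' K y → x = y) ∧
      (H₂.map (QuotientGroup.mk' K)).index ≠ 0 ∧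
      (∀ g₁ ∈ H₁, ∀ g₂ ∈ H₂, g₁ * g₂ = g₂ * g₁) ∧
      (Subgroup.closure ((H₁ : Set G) ∪ (H₂ : Set G))).index ≠ 0 := by
  -- torsion-freeness of K as a group
  have htfK : ∀ g : K, g ≠ 1 → ¬ IsOfFinOrder g := by
    intro g hg hfo
    have hco : (g : G) ≠ 1 := by
      simpa using hg
    exact hKtf (g : G) g.2 hco (K.subtype.isOfFinOrder hfo)
  haveI : (C₁ ⊔ C₂).FiniteIndex := ⟨hidx⟩
  have hrelidx : (C₁ ⊔ C₂).relIndex K ≠ 0 :=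
    (Subgroup.instFiniteIndex_subgroupOf (C₁ ⊔ C₂) K).index_ne_zero
  -- the join of C₁ and C₂ ⊓ K is (C₁ ⊔ C₂) ⊓ K
  have hsupK : C₁ ⊔ (C₂ ⊓ K) = (C₁ ⊔ C₂) ⊓ K := by
    apply le_antisymm
    · exact sup_le (le_inf le_sup_left hC₁K)
        (le_inf (inf_le_left.trans le_sup_right) inf_le_right)
    · intro x hx
      rw [Subgroup.mem_inf] at hx
      obtain ⟨c₁, h1, c₂, h2, rfl⟩ := mem_sup_of_comm hcomm hx.1
      have hc₂K : c₂ ∈ K := (mul_mem_cancel_left (hC₁K h1)).1 hx.2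
      exact mul_mem (Subgroup.mem_sup_left h1)
        (Subgroup.mem_sup_right (Subgroup.mem_inf.2 ⟨h2, hc₂K⟩))
  -- apply the key lemma inside K
  have hdcomm : ∀ x ∈ C₁.subgroupOf K, ∀ y ∈ (C₂ ⊓ K).subgroupOf K, x * y = y * x := by
    intro x hx y hy
    apply Subtype.ext
    exact hcomm (x : G) hx (y : G) (Subgroup.mem_inf.1 hy).1
  have hdidx : (C₁.subgroupOf K ⊔ (C₂ ⊓ K).subgroupOf K).index ≠ 0 := by
    rw [← Subgroup.subgroupOf_sup hC₁K inf_le_right, hsupK]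
    show ((C₁ ⊔ C₂) ⊓ K).relIndex K ≠ 0
    rw [Subgroup.inf_relIndex_right]
    exact hrelidx
  have hcases := key hKnp (C₁.subgroupOf K) ((C₂ ⊓ K).subgroupOf K) hdcomm hdidx
  -- C₁ is infinite, so its copy in K is infinite
  have hD₁inf : ¬ ((C₁.subgroupOf K : Set K)).Finite := by
    intro hfin
    apply hC₁inf
    have himg : (C₁ : Set G) = (K.subtype) '' (C₁.subgroupOf K : Set K) := by
      ext x
      constructor
      · intro hx
        exact ⟨⟨x, hC₁K hx⟩, hx, rfl⟩
      · rintro ⟨y, hy, rfl⟩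
        exact hy
    rw [himg]
    exact hfin.image _
  have hD₂fin : ((C₂ ⊓ K).subgroupOf K : Set K).Finite := by
    rcases hcases with h | h
    · exact absurd h hD₁inf
    · exact h
  have hD₂bot : (C₂ ⊓ K).subgroupOf K = ⊥ :=
    subgroup_eq_bot_of_finite htfK _ hD₂fin
  have hC₂K : C₂ ⊓ K = ⊥ :=
    (Subgroup.subgroupOf_eq_bot.1 hD₂bot).eq_bot_of_le inf_le_right
  refine ⟨C₁, C₂, hC₁K, ?_, ?_, ?_, hcomm, ?_⟩
  · -- relIndex of C₁ in K
    have hC₁eq : C₁ = (C₁ ⊔ C₂) ⊓ K := by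
      rw [← hsupK, hC₂K, sup_bot_eq]
    rw [hC₁eq, Subgroup.inf_relIndex_right]
    exact hrelidx
  · -- injectivity of π on C₂
    intro x hx y hy hxy
    rw [QuotientGroup.mk'_eq_mk'] at hxy
    obtain ⟨z, hz, rfl⟩ := hxy
    have hzC₂ : z ∈ C₂ := by
      have := mul_mem (inv_mem hx) hy
      rwa [inv_mul_cancel_left] at this
    have : z ∈ C₂ ⊓ K := Subgroup.mem_inf.2 ⟨hzC₂, hz⟩
    rw [hC₂K, Subgroup.mem_bot] at this
    rw [this, mul_one]
  · -- finite index of the image of C₂ in the quotient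
    have hmapeq : C₂.map (QuotientGroup.mk' K) = (C₁ ⊔ C₂).map (QuotientGroup.mk' K) := by
      rw [Subgroup.map_sup]
      have : C₁.map (QuotientGroup.mk' K) = ⊥ := by
        rw [Subgroup.map_eq_bot_iff, QuotientGroup.ker_mk']
        exact hC₁K
      rw [this, bot_sup_eq]
    rw [hmapeq]
    intro h0
    exact hidx (Nat.eq_zero_of_zero_dvd
      (h0 ▸ Subgroup.index_map_dvd _ (QuotientGroup.mk'_surjective K)))
  · -- finite index of the closure
    rw [Subgroup.closure_union, Subgroup.closure_eq, Subgroup.closure_eq]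
    exact hidx

end ForwardAux

/-- Let Γ be a group, K a normal subgroup of Γ with quotient map
π : Γ → Γ/K, and set Q = Γ/K. Assume that K and Q are both nontrivial,
torsion-free, and not presentable by products. Then Γ is presentable by a product
if and only if there exist subgroups H₁ ≤ K and H₂ ≤ Γ such that: H₁ has finite
index in K; π restricted to H₂ is injective and π(H₂) has finite index in Q;
H₁ and H₂ commute elementwise; and the subgroup of Γ generated by H₁ ∪ H₂ has
finite index in Γ. -/
theorem presentable_iff_virtually_splits_extension {G : Type} [Group G]
    (K : Subgroup G) [K.Normal]
    (hKnt : K ≠ ⊥)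
    (hKtf : ∀ g ∈ K, g ≠ 1 → ¬ IsOfFinOrder g)
    (hKnp : ¬ PresentableByProduct K)
    (hQnt : Nontrivial (G ⧸ K))
    (hQtf : ∀ q : G ⧸ K, q ≠ 1 → ¬ IsOfFinOrder q)
    (hQnp : ¬ PresentableByProduct (G ⧸ K)) :
    PresentableByProduct G ↔
      ∃ H₁ H₂ : Subgroup G,
        H₁ ≤ K ∧
        H₁.relIndex K ≠ 0 ∧
        (∀ x ∈ H₂, ∀ y ∈ H₂,
          QuotientGroup.mk' K x = QuotientGroup.mk' K y → x = y) ∧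
        (H₂.map (QuotientGroup.mk' K)).index ≠ 0 ∧
        (∀ g₁ ∈ H₁, ∀ g₂ ∈ H₂, g₁ * g₂ = g₂ * g₁) ∧
        (Subgroup.closure ((H₁ : Set G) ∪ (H₂ : Set G))).index ≠ 0 := by
  constructor
  · -- forward direction
    rintro ⟨A, B, _, _, φ, hidx, h1, h2⟩
    set C₁ : Subgroup G := (φ.comp (MonoidHom.inl A B)).range with hC₁def
    set C₂ : Subgroup G := (φ.comp (MonoidHom.inr A B)).range with hC₂def
    have hC₁set : (C₁ : Set G) = Set.range fun a : A => φ (a, 1) := by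
      ext x
      simp [hC₁def, MonoidHom.mem_range]
    have hC₂set : (C₂ : Set G) = Set.range fun b : B => φ (1, b) := by
      ext x
      simp [hC₂def, MonoidHom.mem_range]
    have hcomm : ∀ x ∈ C₁, ∀ y ∈ C₂, x * y = y * x := by
      rintro x hx y hy
      obtain ⟨a, rfl⟩ := hx
      obtain ⟨b, rfl⟩ := hy
      simp only [MonoidHom.comp_apply, MonoidHom.inl_apply, MonoidHom.inr_apply]
      rw [← map_mul, ← map_mul]
      congr 1
      ext <;> simp
    have hsup : C₁ ⊔ C₂ = φ.range := by
      apply le_antisymm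
      · rw [sup_le_iff]
        constructor
        · rintro x ⟨a, rfl⟩; exact ⟨(a, 1), rfl⟩
        · rintro x ⟨b, rfl⟩; exact ⟨(1, b), rfl⟩
      · rintro x ⟨p, rfl⟩
        have : φ p = φ (p.1, 1) * φ (1, p.2) := by
          rw [← map_mul]
          congr 1
          ext <;> simp
        rw [this]
        exact mul_mem (Subgroup.mem_sup_left ⟨p.1, rfl⟩)
          (Subgroup.mem_sup_right ⟨p.2, rfl⟩)
    have hidx' : (C₁ ⊔ C₂).index ≠ 0 := by rw [hsup]; exact hidx
    -- look at images in the quotient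
    set π := QuotientGroup.mk' K with hπdef
    have hmcomm : ∀ x ∈ C₁.map π, ∀ y ∈ C₂.map π, x * y = y * x := by
      intro x hx y hy
      obtain ⟨a, ha, rfl⟩ := Subgroup.mem_map.1 hx
      obtain ⟨b, hb, rfl⟩ := Subgroup.mem_map.1 hy
      rw [← map_mul, ← map_mul, hcomm a ha b hb]
    have hmidx : (C₁.map π ⊔ C₂.map π).index ≠ 0 := by
      rw [← Subgroup.map_sup]
      intro h0
      exact hidx' (Nat.eq_zero_of_zero_dvd
        (h0 ▸ Subgroup.index_map_dvd _ (QuotientGroup.mk'_surjective K)))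
    have hmcases := key hQnp (C₁.map π) (C₂.map π) hmcomm hmidx
    rcases hmcases with hfin | hfin
    · -- C₁ maps to a finite, hence trivial, subgroup of Q, so C₁ ≤ K
      have hC₁K : C₁ ≤ K := by
        have hbot : C₁.map π = ⊥ := subgroup_eq_bot_of_finite hQtf _ hfin
        rw [Subgroup.map_eq_bot_iff, hπdef, QuotientGroup.ker_mk'] at hbot
        exact hbot
      exact forward_aux K hKtf hKnp C₁ C₂ hcomm hidx' (hC₁set ▸ h1) hC₁K
    · -- symmetric case: C₂ ≤ K
      have hC₂K : C₂ ≤ K := by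
        have hbot : C₂.map π = ⊥ := subgroup_eq_bot_of_finite hQtf _ hfin
        rw [Subgroup.map_eq_bot_iff, hπdef, QuotientGroup.ker_mk'] at hbot
        exact hbot
      exact forward_aux K hKtf hKnp C₂ C₁
        (fun x hx y hy => (hcomm y hy x hx).symm)
        (by rw [sup_comm]; exact hidx') (hC₂set ▸ h2) hC₂K
  · -- backward direction
    rintro ⟨H₁, H₂, hle, hrel, _hinj, hmapidx, hcomm, hcl⟩
    rw [Subgroup.closure_union, Subgroup.closure_eq, Subgroup.closure_eq] at hcl
    refine ⟨H₁, H₂, inferInstance, inferInstance, commMulHom H₁ H₂ hcomm, ?_, ?_, ?_⟩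
    · rw [commMulHom_range]; exact hcl
    · rw [commMulHom_left]
      -- H₁ is an infinite subset of G
      have htfK : ∀ g : K, g ≠ 1 → ¬ IsOfFinOrder g := by
        intro g hg hfo
        have hco : (g : G) ≠ 1 := by simpa using hg
        exact hKtf (g : G) g.2 hco (K.subtype.isOfFinOrder hfo)
      obtain ⟨g, hg⟩ := Subgroup.ne_bot_iff_exists_ne_one.1 hKnt
      haveI : Infinite K := infinite_of_torsionfree htfK g hg
      haveI : Infinite (H₁.subgroupOf K) := infinite_subgroup_of_index_ne_zero _ hrel
      have hinfset : ((H₁.subgroupOf K : Set K)).Infinite := Set.infinite_coe_iff.1 ‹_›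
      have himg : (H₁ : Set G) = (K.subtype) '' (H₁.subgroupOf K : Set K) := by
        ext x
        constructor
        · intro hx
          exact ⟨⟨x, hle hx⟩, hx, rfl⟩
        · rintro ⟨y, hy, rfl⟩
          exact hy
      rw [himg]
      exact hinfset.image (Set.injOn_of_injective K.subtype_injective)
    · rw [commMulHom_right]
      -- H₂ is an infinite subset of G since its image in Q is infinite
      obtain ⟨q, hq⟩ := exists_ne (1 : G ⧸ K)
      haveI : Infinite (G ⧸ K) := infinite_of_torsionfree hQtf q hq
      haveI : Infinite (H₂.map (QuotientGroup.mk' K)) :=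
        infinite_subgroup_of_index_ne_zero _ hmapidx
      have hms : ((H₂.map (QuotientGroup.mk' K) : Set (G ⧸ K))).Infinite :=
        Set.infinite_coe_iff.1 ‹_›
      rw [Subgroup.coe_map] at hms
      exact hms.of_image
end
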